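/- For all natural numbers n and k ≤ n, the sum over all Ferrers boards B contained in the n×n square of the k-th rook number r_k(B) equals (2n)! / (2^k · k! · (n−k)! · (n−k)!). -/

import Mathlib

open Finset

def plc (N k : ℕ) (lam : Fin N → Fin (N + 1)) : Finset (Finset (Fin N × Fin N)) :=
  (univ : Finset (Finset (Fin N × Fin N))).filter (fun P =>
    P.card = k ∧ (∀ c ∈ P, (c.2 : ℕ) < (lam c.1 : ℕ)) ∧
    (∀ c ∈ P, ∀ c' ∈ P, c ≠ c' → c.1 ≠ c'.1 ∧ c.2 ≠ c'.2))

def boards (N a b : ℕ) : Finset (Fin N → Fin (N + 1)) :=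
  (univ : Finset (Fin N → Fin (N + 1))).filter (fun lam =>
    (∀ i j : Fin N, i ≤ j → lam j ≤ lam i) ∧ (∀ i, (lam i : ℕ) ≤ b) ∧
    (∀ i : Fin N, a ≤ (i : ℕ) → lam i = 0))

def g (N a b k : ℕ) : ℕ := ∑ lam ∈ boards N a b, (plc N k lam).card

lemma mem_plc {N k : ℕ} {lam : Fin N → Fin (N+1)} {P : Finset (Fin N × Fin N)} :
    P ∈ plc N k lam ↔ P.card = k ∧ (∀ c ∈ P, (c.2 : ℕ) < (lam c.1 : ℕ)) ∧
      (∀ c ∈ P, ∀ c' ∈ P, c ≠ c' → c.1 ≠ c'.1 ∧ c.2 ≠ c'.2) := by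
  simp [plc]

lemma mem_boards {N a b : ℕ} {lam : Fin N → Fin (N+1)} :
    lam ∈ boards N a b ↔ (∀ i j : Fin N, i ≤ j → lam j ≤ lam i) ∧ (∀ i, (lam i : ℕ) ≤ b) ∧
      (∀ i : Fin N, a ≤ (i : ℕ) → lam i = 0) := by
  simp [boards]

lemma plc_zero {N : ℕ} (lam : Fin N → Fin (N+1)) : plc N 0 lam = {∅} := by
  ext P
  simp only [mem_plc, mem_singleton, card_eq_zero]
  constructor
  · rintro ⟨h, -, -⟩; exact h
  · rintro rfl; simp

lemma card_image_fst {N : ℕ} {P : Finset (Fin N × Fin N)}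
    (hna : ∀ c ∈ P, ∀ c' ∈ P, c ≠ c' → c.1 ≠ c'.1 ∧ c.2 ≠ c'.2) :
    (P.image Prod.fst).card = P.card := by
  apply card_image_of_injOn
  intro c hc c' hc' h
  by_contra hne
  exact (hna c hc c' hc' hne).1 h

lemma card_image_snd {N : ℕ} {P : Finset (Fin N × Fin N)}
    (hna : ∀ c ∈ P, ∀ c' ∈ P, c ≠ c' → c.1 ≠ c'.1 ∧ c.2 ≠ c'.2) :
    (P.image Prod.snd).card = P.card := by
  apply card_image_of_injOn
  intro c hc c' hc' h
  by_contra hne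
  exact (hna c hc c' hc' hne).2 h

lemma card_filter_lt {N a : ℕ} (haN : a ≤ N) :
    ((univ : Finset (Fin N)).filter (fun i : Fin N => (i : ℕ) < a)).card = a := by
  rw [← Finset.card_range a]
  apply card_bij (fun (i : Fin N) _ => (i : ℕ))
  · intro i hi; simp at hi ⊢; exact hi
  · intro i _ j _ h; exact Fin.ext h
  · intro x hx
    simp at hx
    exact ⟨⟨x, lt_of_lt_of_le hx haN⟩, by simpa using hx, rfl⟩

lemma plc_empty_of_cols {N a k : ℕ} {lam : Fin N → Fin (N+1)}
    (hpad : ∀ i : Fin N, a ≤ (i : ℕ) → lam i = 0) (hk : a < k) :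
    plc N k lam = ∅ := by
  rw [Finset.eq_empty_iff_forall_notMem]
  intro P hP
  rw [mem_plc] at hP
  obtain ⟨hcard, hcell, hna⟩ := hP
  have himg : P.image Prod.fst ⊆ (univ : Finset (Fin N)).filter (fun i : Fin N => (i : ℕ) < a) := by
    intro i hi
    simp only [mem_image] at hi
    obtain ⟨c, hc, rfl⟩ := hi
    simp only [mem_filter, mem_univ, true_and]
    by_contra h
    have h0 := hpad c.1 (le_of_not_gt h)
    have h1 := hcell c hc
    rw [h0] at h1
    simp at h1
  have h1 : (P.image Prod.fst).card ≤ ((univ : Finset (Fin N)).filter (fun i : Fin N => (i : ℕ) < a)).card :=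
    card_le_card himg
  have h2 : ((univ : Finset (Fin N)).filter (fun i : Fin N => (i : ℕ) < a)).card ≤ a := by
    have : ((univ : Finset (Fin N)).filter (fun i : Fin N => (i : ℕ) < a)).card = ((((univ : Finset (Fin N)).filter (fun i : Fin N => (i : ℕ) < a))).image Fin.val).card := by
      rw [card_image_of_injOn]
      exact fun x _ y _ h => Fin.ext h
    rw [this, ← Finset.card_range a]
    apply card_le_card
    intro x hx
    simp only [mem_image, mem_filter] at hx
    obtain ⟨i, ⟨-, hi⟩, rfl⟩ := hx
    simpa using hi
  rw [card_image_fst hna, hcard] at h1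
  omega

lemma plc_empty_of_rows {N b k : ℕ} {lam : Fin N → Fin (N+1)}
    (hle : ∀ i, (lam i : ℕ) ≤ b) (hk : b < k) :
    plc N k lam = ∅ := by
  rw [Finset.eq_empty_iff_forall_notMem]
  intro P hP
  rw [mem_plc] at hP
  obtain ⟨hcard, hcell, hna⟩ := hP
  have himg : P.image Prod.snd ⊆ (univ : Finset (Fin N)).filter (fun j : Fin N => (j : ℕ) < b) := by
    intro j hj
    simp only [mem_image] at hj
    obtain ⟨c, hc, rfl⟩ := hj
    simp only [mem_filter, mem_univ, true_and]
    have := hcell c hc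
    have := hle c.1
    omega
  have h1 := card_le_card himg
  have h2 : ((univ : Finset (Fin N)).filter (fun j : Fin N => (j : ℕ) < b)).card ≤ b := by
    have : ((univ : Finset (Fin N)).filter (fun j : Fin N => (j : ℕ) < b)).card = ((((univ : Finset (Fin N)).filter (fun j : Fin N => (j : ℕ) < b))).image Fin.val).card := by
      rw [card_image_of_injOn]
      exact fun x _ y _ h => Fin.ext h
    rw [this, ← Finset.card_range b]
    apply card_le_card
    intro x hx
    simp only [mem_image, mem_filter] at hx
    obtain ⟨i, ⟨-, hi⟩, rfl⟩ := hx
    simpa using hi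
  rw [card_image_snd hna, hcard] at h1
  omega

lemma g_zero_of_cols {N a b k : ℕ} (hk : a < k) : g N a b k = 0 := by
  unfold g
  apply Finset.sum_eq_zero
  intro lam hlam
  rw [mem_boards] at hlam
  rw [plc_empty_of_cols hlam.2.2 hk, Finset.card_empty]

lemma g_zero_of_rows {N a b k : ℕ} (hk : b < k) : g N a b k = 0 := by
  unfold g
  apply Finset.sum_eq_zero
  intro lam hlam
  rw [mem_boards] at hlam
  rw [plc_empty_of_rows hlam.2.1 hk, Finset.card_empty]

lemma boards_a_zero {N b : ℕ} : boards N 0 b = {0} := by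
  ext lam
  simp only [mem_boards, mem_singleton]
  constructor
  · rintro ⟨-, -, h⟩
    funext i
    exact h i (Nat.zero_le _)
  · rintro rfl
    refine ⟨fun i j _ => le_refl _, fun i => by simp, fun i _ => rfl⟩

lemma boards_b_zero {N a : ℕ} : boards N a 0 = {0} := by
  ext lam
  simp only [mem_boards, mem_singleton]
  constructor
  · rintro ⟨-, h, -⟩
    funext i
    exact Fin.ext (Nat.le_zero.mp (h i))
  · rintro rfl
    refine ⟨fun i j _ => le_refl _, fun i => by simp, fun i _ => rfl⟩

lemma g_a_zero {N b : ℕ} : g N 0 b 0 = 1 := by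
  unfold g
  rw [boards_a_zero, Finset.sum_singleton, plc_zero, Finset.card_singleton]

lemma g_b_zero {N a : ℕ} : g N a 0 0 = 1 := by
  unfold g
  rw [boards_b_zero, Finset.sum_singleton, plc_zero, Finset.card_singleton]

def upb (N a : ℕ) (lam' : Fin N → Fin (N+1)) : Fin N → Fin (N+1) :=
  fun i => if h : (i : ℕ) < a ∧ (lam' i : ℕ) < N then ⟨(lam' i : ℕ) + 1, by omega⟩ else 0

def downb (N : ℕ) (lam : Fin N → Fin (N+1)) : Fin N → Fin (N+1) :=
  fun i => ⟨(lam i : ℕ) - 1, by have := (lam i).isLt; omega⟩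

lemma upb_val (N a : ℕ) (lam' : Fin N → Fin (N+1)) (i : Fin N) :
    ((upb N a lam' i : Fin (N+1)) : ℕ) =
      if (i : ℕ) < a ∧ (lam' i : ℕ) < N then (lam' i : ℕ) + 1 else 0 := by
  unfold upb
  split <;> simp_all

lemma downb_val (N : ℕ) (lam : Fin N → Fin (N+1)) (i : Fin N) :
    ((downb N lam i : Fin (N+1)) : ℕ) = (lam i : ℕ) - 1 := rfl

lemma lam_pos {N a : ℕ} (ha1 : 1 ≤ a) (haN : a ≤ N)
    {lam : Fin N → Fin (N+1)} (hmono : ∀ i j : Fin N, i ≤ j → lam j ≤ lam i)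
    (hne : lam ⟨a-1, by omega⟩ ≠ 0) {i : Fin N} (hi : (i : ℕ) < a) : 1 ≤ (lam i : ℕ) := by
  have h1 : i ≤ (⟨a-1, by omega⟩ : Fin N) := by
    rw [Fin.le_def]; simp; omega
  have h2 := hmono i _ h1
  have h3 : 1 ≤ ((lam (⟨a-1, by omega⟩ : Fin N)) : ℕ) := by
    rcases Nat.eq_zero_or_pos ((lam (⟨a-1, by omega⟩ : Fin N)) : ℕ) with h | h
    · exact absurd (by apply Fin.ext; simpa using h) hne
    · exact h
  rw [Fin.le_def] at h2
  omega

lemma upb_mem {N a b : ℕ} (ha1 : 1 ≤ a) (haN : a ≤ N) (hb1 : 1 ≤ b) (hbN : b ≤ N)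
    {lam' : Fin N → Fin (N+1)} (h : lam' ∈ boards N a (b-1)) :
    upb N a lam' ∈ (boards N a b).filter (fun lam => lam ⟨a-1, by omega⟩ ≠ 0) := by
  rw [mem_boards] at h
  obtain ⟨hmono, hle, hpad⟩ := h
  rw [mem_filter, mem_boards]
  refine ⟨⟨?_, ?_, ?_⟩, ?_⟩
  · intro i j hij
    rw [Fin.le_def] at hij ⊢
    rw [upb_val, upb_val]
    have := hmono i j hij
    rw [Fin.le_def] at this
    have := hle i
    have := hle j
    split_ifs <;> omega
  · intro i
    rw [upb_val]
    have := hle i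
    split_ifs <;> omega
  · intro i hi
    apply Fin.ext
    rw [upb_val]
    simp only [Fin.val_zero]
    split_ifs with h
    · omega
    · rfl
  · intro hcon
    have h2 := hle ⟨a-1, by omega⟩
    have h1 : ((upb N a lam' ⟨a-1, by omega⟩ : Fin (N+1)) : ℕ) = 0 := by rw [hcon]; rfl
    rw [upb_val] at h1
    simp only [Fin.val_mk] at h1 h2
    rw [if_pos ⟨by omega, by omega⟩] at h1
    omega

lemma downb_mem {N a b : ℕ} (ha1 : 1 ≤ a) (haN : a ≤ N) (hb1 : 1 ≤ b) (hbN : b ≤ N)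
    {lam : Fin N → Fin (N+1)}
    (h : lam ∈ (boards N a b).filter (fun lam => lam ⟨a-1, by omega⟩ ≠ 0)) :
    downb N lam ∈ boards N a (b-1) := by
  rw [mem_filter, mem_boards] at h
  obtain ⟨⟨hmono, hle, hpad⟩, hne⟩ := h
  rw [mem_boards]
  refine ⟨?_, ?_, ?_⟩
  · intro i j hij
    rw [Fin.le_def]
    rw [downb_val, downb_val]
    have := hmono i j hij
    rw [Fin.le_def] at this
    omega
  · intro i
    rw [downb_val]
    by_cases hi : (i : ℕ) < a
    · have := lam_pos ha1 haN hmono hne hi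
      have := hle i
      omega
    · have := hpad i (le_of_not_gt hi)
      rw [this]
      simp
  · intro i hi
    apply Fin.ext
    rw [downb_val, hpad i hi]
    simp

lemma upb_downb {N a b : ℕ} (ha1 : 1 ≤ a) (haN : a ≤ N) (hb1 : 1 ≤ b) (hbN : b ≤ N)
    {lam : Fin N → Fin (N+1)}
    (h : lam ∈ (boards N a b).filter (fun lam => lam ⟨a-1, by omega⟩ ≠ 0)) :
    upb N a (downb N lam) = lam := by
  rw [mem_filter, mem_boards] at h
  obtain ⟨⟨hmono, hle, hpad⟩, hne⟩ := h
  funext i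
  apply Fin.ext
  rw [upb_val, downb_val]
  by_cases hi : (i : ℕ) < a
  · have h1 := lam_pos ha1 haN hmono hne hi
    have h2 := hle i
    have : (i : ℕ) < a ∧ (lam i : ℕ) - 1 < N := ⟨hi, by omega⟩
    rw [if_pos this]
    omega
  · have := hpad i (le_of_not_gt hi)
    rw [if_neg (by tauto), this]
    simp

lemma downb_upb {N a b : ℕ} (ha1 : 1 ≤ a) (haN : a ≤ N) (hb1 : 1 ≤ b) (hbN : b ≤ N)
    {lam' : Fin N → Fin (N+1)} (h : lam' ∈ boards N a (b-1)) :
    downb N (upb N a lam') = lam' := by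
  rw [mem_boards] at h
  obtain ⟨hmono, hle, hpad⟩ := h
  funext i
  apply Fin.ext
  rw [downb_val, upb_val]
  by_cases hi : (i : ℕ) < a
  · have := hle i
    rw [if_pos ⟨hi, by omega⟩]
    omega
  · rw [if_neg (by tauto)]
    have := hpad i (le_of_not_gt hi)
    rw [this]
    simp

lemma sum_transport {N a b : ℕ} (ha1 : 1 ≤ a) (haN : a ≤ N) (hb1 : 1 ≤ b) (hbN : b ≤ N)
    (F : (Fin N → Fin (N+1)) → ℕ) :
    ∑ lam ∈ (boards N a b).filter (fun lam => lam ⟨a-1, by omega⟩ ≠ 0), F lam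
      = ∑ lam' ∈ boards N a (b-1), F (upb N a lam') := by
  apply Finset.sum_nbij' (i := downb N) (j := upb N a)
  · intro lam hlam; exact downb_mem ha1 haN hb1 hbN hlam
  · intro lam' hlam'; exact upb_mem ha1 haN hb1 hbN hlam'
  · intro lam hlam; exact upb_downb ha1 haN hb1 hbN hlam
  · intro lam' hlam'; exact downb_upb ha1 haN hb1 hbN hlam'
  · intro lam hlam
    rw [upb_downb ha1 haN hb1 hbN hlam]

def dcell {N : ℕ} (c : Fin N × Fin N) : Fin N × Fin N :=
  (c.1, ⟨(c.2 : ℕ) - 1, by have := c.2.isLt; omega⟩)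

def ucell {N : ℕ} (c : Fin N × Fin N) : Fin N × Fin N :=
  if h : (c.2 : ℕ) + 1 < N then (c.1, ⟨(c.2 : ℕ) + 1, h⟩) else c

lemma dcell_fst {N : ℕ} (c : Fin N × Fin N) : (dcell c).1 = c.1 := rfl
lemma dcell_snd {N : ℕ} (c : Fin N × Fin N) : ((dcell c).2 : ℕ) = (c.2 : ℕ) - 1 := rfl

lemma ucell_eq {N : ℕ} {c : Fin N × Fin N} (h : (c.2 : ℕ) + 1 < N) :
    ucell c = (c.1, ⟨(c.2 : ℕ) + 1, h⟩) := dif_pos h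

lemma ucell_fst {N : ℕ} {c : Fin N × Fin N} (h : (c.2 : ℕ) + 1 < N) :
    (ucell c).1 = c.1 := by rw [ucell_eq h]

lemma ucell_snd {N : ℕ} {c : Fin N × Fin N} (h : (c.2 : ℕ) + 1 < N) :
    ((ucell c).2 : ℕ) = (c.2 : ℕ) + 1 := by rw [ucell_eq h]

lemma du_cell {N : ℕ} {c : Fin N × Fin N} (h : (c.2 : ℕ) ≠ 0) : ucell (dcell c) = c := by
  have h2 : ((dcell c).2 : ℕ) + 1 < N := by
    rw [dcell_snd]
    have := c.2.isLt
    omega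
  rw [ucell_eq h2]
  apply Prod.ext
  · rfl
  · apply Fin.ext
    simp only [dcell_snd]
    omega

lemma ud_cell {N : ℕ} {c : Fin N × Fin N} (h : (c.2 : ℕ) + 1 < N) : dcell (ucell c) = c := by
  rw [ucell_eq h]
  apply Prod.ext
  · rfl
  · apply Fin.ext
    simp only [dcell_snd]
    omega

lemma dcell_injOn {N : ℕ} {P : Finset (Fin N × Fin N)} (h : ∀ c ∈ P, (c.2 : ℕ) ≠ 0) :
    Set.InjOn dcell (P : Set (Fin N × Fin N)) := by
  intro c hc c' hc' heq
  rw [Finset.mem_coe] at hc hc'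
  have h1 : c.1 = c'.1 := by rw [← dcell_fst c, ← dcell_fst c', heq]
  have h2 : ((dcell c).2 : ℕ) = ((dcell c').2 : ℕ) := by rw [heq]
  rw [dcell_snd, dcell_snd] at h2
  have h3 := h c hc
  have h4 := h c' hc'
  exact Prod.ext h1 (Fin.ext (by omega))

lemma image_dcell_ucell {N : ℕ} {P : Finset (Fin N × Fin N)} (h : ∀ c ∈ P, (c.2 : ℕ) ≠ 0) :
    (P.image dcell).image ucell = P := by
  rw [Finset.image_image]
  have : ∀ c ∈ P, (ucell ∘ dcell) c = id c := fun c hc => du_cell (h c hc)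
  rw [Finset.image_congr this, Finset.image_id]

lemma image_ucell_dcell {N : ℕ} {P : Finset (Fin N × Fin N)} (h : ∀ c ∈ P, (c.2 : ℕ) + 1 < N) :
    (P.image ucell).image dcell = P := by
  rw [Finset.image_image]
  have : ∀ c ∈ P, (dcell ∘ ucell) c = id c := fun c hc => ud_cell (h c hc)
  rw [Finset.image_congr this, Finset.image_id]

section L3

variable {N a k : ℕ} {lam' : Fin N → Fin (N+1)}

-- cells of a plc for lam' have bounded snd and fst < a
lemma cell_facts (h0 : ∀ i : Fin N, a ≤ (i:ℕ) → lam' i = 0) (hlt : ∀ i, (lam' i : ℕ) < N)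
    {P : Finset (Fin N × Fin N)} (hcell : ∀ c ∈ P, (c.2 : ℕ) < (lam' c.1 : ℕ)) :
    ∀ c ∈ P, (c.1 : ℕ) < a ∧ (c.2 : ℕ) + 1 < N := by
  intro c hc
  have h1 := hcell c hc
  have h2 := hlt c.1
  constructor
  · by_contra hcon
    rw [h0 c.1 (le_of_not_gt hcon)] at h1
    simp at h1
  · omega

lemma part_b (ha1 : 1 ≤ a) (haN : a ≤ N)
    (h0 : ∀ i : Fin N, a ≤ (i:ℕ) → lam' i = 0) (hlt : ∀ i, (lam' i : ℕ) < N) :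
    ((plc N k (upb N a lam')).filter (fun P => ∀ c ∈ P, (c.2 : ℕ) ≠ 0)).card
      = (plc N k lam').card := by
  apply card_bij (fun P _ => P.image dcell)
  · -- maps into plc N k lam'
    intro P hP
    rw [mem_filter, mem_plc] at hP
    obtain ⟨⟨hcard, hcell, hna⟩, hno0⟩ := hP
    rw [mem_plc]
    refine ⟨?_, ?_, ?_⟩
    · rw [card_image_of_injOn (dcell_injOn hno0), hcard]
    · intro d hd
      rw [mem_image] at hd
      obtain ⟨c, hc, rfl⟩ := hd
      rw [dcell_snd, dcell_fst]
      have h1 := hcell c hc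
      rw [upb_val] at h1
      have h2 := hno0 c hc
      split_ifs at h1 with h3
      · omega
      · omega
    · intro d hd d' hd' hne
      rw [mem_image] at hd hd'
      obtain ⟨c, hc, rfl⟩ := hd
      obtain ⟨c', hc', rfl⟩ := hd'
      have hcc : c ≠ c' := fun h => hne (by rw [h])
      obtain ⟨hf, hs⟩ := hna c hc c' hc' hcc
      refine ⟨by rw [dcell_fst, dcell_fst]; exact hf, ?_⟩
      intro hcon
      have h2 : ((dcell c).2 : ℕ) = ((dcell c').2 : ℕ) := by rw [hcon]
      rw [dcell_snd, dcell_snd] at h2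
      have h3 := hno0 c hc
      have h4 := hno0 c' hc'
      have h5 : (c.2 : ℕ) ≠ (c'.2 : ℕ) := fun h => hs (Fin.ext h)
      omega
  · -- injective
    intro P₁ h₁ P₂ h₂ heq
    rw [mem_filter] at h₁ h₂
    calc P₁ = (P₁.image dcell).image ucell := (image_dcell_ucell h₁.2).symm
    _ = (P₂.image dcell).image ucell := by rw [heq]
    _ = P₂ := image_dcell_ucell h₂.2
  · -- surjective
    intro P' hP'
    rw [mem_plc] at hP'
    obtain ⟨hcard, hcell, hna⟩ := hP'
    have hfacts := cell_facts h0 hlt hcell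
    have huinj : Set.InjOn ucell (P' : Set (Fin N × Fin N)) := by
      intro c hc c' hc' heq
      rw [Finset.mem_coe] at hc hc'
      have hb := (hfacts c hc).2
      have hb' := (hfacts c' hc').2
      rw [ucell_eq hb, ucell_eq hb'] at heq
      simp only [Prod.mk.injEq] at heq
      have h2 : (c.2 : ℕ) + 1 = (c'.2 : ℕ) + 1 := congrArg Fin.val heq.2
      exact Prod.ext heq.1 (Fin.ext (by omega))
    refine ⟨P'.image ucell, ?_, ?_⟩
    · rw [mem_filter, mem_plc]
      refine ⟨⟨?_, ?_, ?_⟩, ?_⟩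
      · rw [card_image_of_injOn huinj, hcard]
      · intro d hd
        rw [mem_image] at hd
        obtain ⟨c, hc, rfl⟩ := hd
        obtain ⟨hfa, hfb⟩ := hfacts c hc
        rw [ucell_snd hfb, ucell_fst hfb, upb_val, if_pos ⟨hfa, hlt c.1⟩]
        have := hcell c hc
        omega
      · intro d hd d' hd' hne
        rw [mem_image] at hd hd'
        obtain ⟨c, hc, rfl⟩ := hd
        obtain ⟨c', hc', rfl⟩ := hd'
        have hcc : c ≠ c' := fun h => hne (by rw [h])
        obtain ⟨hf, hs⟩ := hna c hc c' hc' hcc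
        obtain ⟨hfa, hfb⟩ := hfacts c hc
        obtain ⟨hfa', hfb'⟩ := hfacts c' hc'
        constructor
        · rw [ucell_fst hfb, ucell_fst hfb']; exact hf
        · intro hcon
          have h2 : ((ucell c).2 : ℕ) = ((ucell c').2 : ℕ) := by rw [hcon]
          rw [ucell_snd hfb, ucell_snd hfb'] at h2
          exact hs (Fin.ext (by omega))
      · intro d hd
        rw [mem_image] at hd
        obtain ⟨c, hc, rfl⟩ := hd
        rw [ucell_snd (hfacts c hc).2]
        omega
    · exact image_ucell_dcell (fun c hc => (hfacts c hc).2)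

end L3

section L3c

variable {N a k : ℕ} {lam' : Fin N → Fin (N+1)}

lemma part_c (hN : 0 < N) (hk : 1 ≤ k) (ha1 : 1 ≤ a) (haN : a ≤ N)
    (h0 : ∀ i : Fin N, a ≤ (i:ℕ) → lam' i = 0) (hlt : ∀ i, (lam' i : ℕ) < N) :
    ((plc N k (upb N a lam')).filter (fun P => ¬ ∀ c ∈ P, (c.2 : ℕ) ≠ 0)).card
      = (a - (k-1)) * (plc N (k-1) lam').card := by
  set s2 := (plc N k (upb N a lam')).filter (fun P => ¬ ∀ c ∈ P, (c.2 : ℕ) ≠ 0) with hs2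
  set F : Finset (Fin N × Fin N) → Finset (Fin N × Fin N) :=
    fun P => (P.filter (fun c => (c.2 : ℕ) ≠ 0)).image dcell with hF
  -- facts about members of s2
  have s2facts : ∀ P ∈ s2, ∃ c0 ∈ P, (c0.2 : ℕ) = 0 ∧
      P.filter (fun c => ¬ (c.2 : ℕ) ≠ 0) = {c0} ∧ (P.filter (fun c => (c.2 : ℕ) ≠ 0)).card = k - 1 := by
    intro P hP
    rw [hs2, mem_filter, mem_plc] at hP
    obtain ⟨⟨hcard, hcell, hna⟩, hex⟩ := hP
    push_neg at hex
    obtain ⟨c0, hc0, hc00⟩ := hex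
    have huniq : P.filter (fun c => ¬ (c.2 : ℕ) ≠ 0) = {c0} := by
      ext d
      simp only [mem_filter, mem_singleton, not_not]
      constructor
      · rintro ⟨hd, hd0⟩
        by_contra hne
        exact (hna d hd c0 hc0 hne).2 (Fin.ext (by omega))
      · rintro rfl
        exact ⟨hc0, hc00⟩
    have hsplit := Finset.card_filter_add_card_filter_not
      (s := P) (p := fun c => (c.2 : ℕ) ≠ 0)
    rw [huniq] at hsplit
    simp only [card_singleton] at hsplit
    exact ⟨c0, hc0, hc00, huniq, by omega⟩
  have hmapsto : ∀ P ∈ s2, F P ∈ plc N (k-1) lam' := by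
    intro P hP
    obtain ⟨c0, hc0, hc00, huniq, hcard1⟩ := s2facts P hP
    rw [hs2, mem_filter, mem_plc] at hP
    obtain ⟨⟨hcard, hcell, hna⟩, -⟩ := hP
    have hfnz : ∀ c ∈ P.filter (fun c => (c.2 : ℕ) ≠ 0), (c.2 : ℕ) ≠ 0 :=
      fun c hc => (mem_filter.mp hc).2
    rw [mem_plc]
    refine ⟨?_, ?_, ?_⟩
    · rw [hF]
      rw [card_image_of_injOn (dcell_injOn hfnz), hcard1]
    · intro d hd
      rw [hF, mem_image] at hd
      obtain ⟨c, hc, rfl⟩ := hd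
      rw [mem_filter] at hc
      obtain ⟨hcP, hcnz⟩ := hc
      have h1 := hcell c hcP
      rw [upb_val] at h1
      rw [dcell_snd, dcell_fst]
      split_ifs at h1 with h3
      · omega
      · omega
    · intro d hd d' hd' hne
      rw [hF, mem_image] at hd hd'
      obtain ⟨c, hc, rfl⟩ := hd
      obtain ⟨c', hc', rfl⟩ := hd'
      rw [mem_filter] at hc hc'
      have hcc : c ≠ c' := fun h => hne (by rw [h])
      obtain ⟨hf, hs⟩ := hna c hc.1 c' hc'.1 hcc
      refine ⟨by rw [dcell_fst, dcell_fst]; exact hf, ?_⟩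
      intro hcon
      have h2 : ((dcell c).2 : ℕ) = ((dcell c').2 : ℕ) := by rw [hcon]
      rw [dcell_snd, dcell_snd] at h2
      have h5 : (c.2 : ℕ) ≠ (c'.2 : ℕ) := fun h => hs (Fin.ext h)
      have := hc.2
      have := hc'.2
      omega
  rw [Finset.card_eq_sum_card_fiberwise hmapsto]
  rw [Finset.sum_congr rfl (fun P' hP' => ?_), Finset.sum_const, smul_eq_mul, Nat.mul_comm]
  -- fiber card = a - (k-1)
  rw [mem_plc] at hP'
  obtain ⟨hcard', hcell', hna'⟩ := hP'
  have hfacts' := cell_facts h0 hlt hcell'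
  have huinj : Set.InjOn ucell (P' : Set (Fin N × Fin N)) := by
    intro c hc c' hc' heq
    rw [Finset.mem_coe] at hc hc'
    rw [ucell_eq (hfacts' c hc).2, ucell_eq (hfacts' c' hc').2] at heq
    simp only [Prod.mk.injEq] at heq
    have h2 : (c.2 : ℕ) + 1 = (c'.2 : ℕ) + 1 := congrArg Fin.val heq.2
    exact Prod.ext heq.1 (Fin.ext (by omega))
  have hz0 : ∀ d ∈ P'.image ucell, (d.2 : ℕ) ≠ 0 := by
    intro d hd
    rw [mem_image] at hd
    obtain ⟨c, hc, rfl⟩ := hd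
    rw [ucell_snd (hfacts' c hc).2]
    omega
  have hcols : ((univ : Finset (Fin N)).filter
      (fun i : Fin N => (i : ℕ) < a ∧ i ∉ P'.image Prod.fst)).card = a - (k-1) := by
    have hsub : P'.image Prod.fst ⊆ (univ : Finset (Fin N)).filter (fun i : Fin N => (i : ℕ) < a) := by
      intro i hi
      rw [mem_image] at hi
      obtain ⟨c, hc, rfl⟩ := hi
      simp only [mem_filter, mem_univ, true_and]
      exact (hfacts' c hc).1
    have heq2 : (univ : Finset (Fin N)).filter (fun i : Fin N => (i : ℕ) < a ∧ i ∉ P'.image Prod.fst)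
        = ((univ : Finset (Fin N)).filter (fun i : Fin N => (i : ℕ) < a)) \ (P'.image Prod.fst) := by
      ext i
      simp only [mem_filter, mem_sdiff, mem_univ, true_and]
    rw [heq2, card_sdiff_of_subset hsub, card_filter_lt haN, card_image_fst hna', hcard']
  rw [← hcols]
  symm
  apply card_bij (fun col _ => insert ((col, (⟨0, hN⟩ : Fin N)) : Fin N × Fin N) (P'.image ucell))
  · -- membership in fiber
    intro col hcol
    rw [mem_filter] at hcol
    obtain ⟨-, hcola, hcolf⟩ := hcol
    have hnotmem : ((col, (⟨0, hN⟩ : Fin N)) : Fin N × Fin N) ∉ P'.image ucell := by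
      intro hmem
      exact hz0 _ hmem rfl
    rw [mem_filter]
    constructor
    · rw [mem_filter, mem_plc]
      refine ⟨⟨?_, ?_, ?_⟩, ?_⟩
      · rw [card_insert_of_notMem hnotmem, card_image_of_injOn huinj, hcard']
        omega
      · intro d hd
        rw [mem_insert] at hd
        rcases hd with rfl | hd
        · rw [upb_val, if_pos ⟨hcola, hlt col⟩]
          simp
        · rw [mem_image] at hd
          obtain ⟨c, hc, rfl⟩ := hd
          obtain ⟨hfa, hfb⟩ := hfacts' c hc
          rw [ucell_snd hfb, ucell_fst hfb, upb_val, if_pos ⟨hfa, hlt c.1⟩]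
          have := hcell' c hc
          omega
      · intro d hd d' hd' hne
        rw [mem_insert] at hd hd'
        have main : ∀ e ∈ P'.image ucell,
            e.1 ≠ col ∧ (e.2 : ℕ) ≠ 0 := by
          intro e he
          refine ⟨?_, hz0 e he⟩
          rw [mem_image] at he
          obtain ⟨c, hc, rfl⟩ := he
          rw [ucell_fst (hfacts' c hc).2]
          intro hcon
          exact hcolf (mem_image.mpr ⟨c, hc, hcon⟩)
        rcases hd with rfl | hd
        · rcases hd' with rfl | hd'
          · exact absurd rfl hne
          · obtain ⟨h1, h2⟩ := main _ hd'
            exact ⟨fun h => h1 (by rw [← h]), fun h => h2 (by rw [← h])⟩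
        · rcases hd' with rfl | hd'
          · obtain ⟨h1, h2⟩ := main _ hd
            exact ⟨h1, fun h => h2 (by rw [h])⟩
          · rw [mem_image] at hd hd'
            obtain ⟨c, hc, rfl⟩ := hd
            obtain ⟨c', hc', rfl⟩ := hd'
            have hcc : c ≠ c' := fun h => hne (by rw [h])
            obtain ⟨hf, hs⟩ := hna' c hc c' hc' hcc
            obtain ⟨hfa, hfb⟩ := hfacts' c hc
            obtain ⟨hfa', hfb'⟩ := hfacts' c' hc'
            constructor
            · rw [ucell_fst hfb, ucell_fst hfb']; exact hf
            · intro hcon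
              have h2 : ((ucell c).2 : ℕ) = ((ucell c').2 : ℕ) := by rw [hcon]
              rw [ucell_snd hfb, ucell_snd hfb'] at h2
              exact hs (Fin.ext (by omega))
      · intro hall
        exact hall _ (mem_insert_self _ _) rfl
    · -- F P = P'
      simp only [hF]
      rw [Finset.filter_insert, if_neg (by simp)]
      have : (P'.image ucell).filter (fun c => (c.2 : ℕ) ≠ 0) = P'.image ucell :=
        Finset.filter_true_of_mem hz0
      rw [this, image_ucell_dcell (fun c hc => (hfacts' c hc).2)]
  · -- injectivity
    intro col₁ h₁ col₂ h₂ heq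
    have : ((col₁, (⟨0, hN⟩ : Fin N)) : Fin N × Fin N) ∈
        insert ((col₂, (⟨0, hN⟩ : Fin N)) : Fin N × Fin N) (P'.image ucell) := by
      rw [← heq]; exact mem_insert_self _ _
    rw [mem_insert] at this
    rcases this with h | h
    · exact congrArg Prod.fst h
    · exact absurd rfl (hz0 _ h)
  · -- surjectivity
    intro P hP
    rw [mem_filter] at hP
    obtain ⟨hPs2, hFP⟩ := hP
    obtain ⟨c0, hc0, hc00, huniq, hcard1⟩ := s2facts P hPs2
    rw [hs2, mem_filter, mem_plc] at hPs2
    obtain ⟨⟨hcard, hcell, hna⟩, -⟩ := hPs2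
    have hfnz : ∀ c ∈ P.filter (fun c => (c.2 : ℕ) ≠ 0), (c.2 : ℕ) ≠ 0 :=
      fun c hc => (mem_filter.mp hc).2
    have hcol_a : (c0.1 : ℕ) < a := by
      have h1 := hcell c0 hc0
      rw [upb_val] at h1
      split_ifs at h1 with h3
      · exact h3.1
      · omega
    have hup : P'.image ucell = P.filter (fun c => (c.2 : ℕ) ≠ 0) := by
      rw [← hFP, hF, image_dcell_ucell hfnz]
    have hcol_f : c0.1 ∉ P'.image Prod.fst := by
      intro hmem
      rw [mem_image] at hmem
      obtain ⟨e, he, hee⟩ := hmem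
      rw [← hFP, hF, mem_image] at he
      obtain ⟨c, hc, rfl⟩ := he
      rw [mem_filter] at hc
      rw [dcell_fst] at hee
      have hcc : c ≠ c0 := by
        intro h
        rw [h] at hc
        exact hc.2 hc00
      exact (hna c hc.1 c0 hc0 hcc).1 hee
    refine ⟨c0.1, ?_, ?_⟩
    · rw [mem_filter]
      exact ⟨mem_univ _, hcol_a, hcol_f⟩
    · rw [hup]
      have hc0eq : ((c0.1, (⟨0, hN⟩ : Fin N)) : Fin N × Fin N) = c0 :=
        Prod.ext rfl (Fin.ext (by simpa using hc00.symm))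
      rw [hc0eq]
      ext d
      rw [mem_insert, mem_filter]
      constructor
      · rintro (rfl | ⟨hd, -⟩)
        · exact hc0
        · exact hd
      · intro hd
        by_cases hdz : (d.2 : ℕ) ≠ 0
        · exact Or.inr ⟨hd, hdz⟩
        · left
          by_contra hne
          rw [not_not] at hdz
          exact (hna d hd c0 hc0 hne).2 (Fin.ext (by omega))

lemma L3 (hN : 0 < N) (hk : 1 ≤ k) (ha1 : 1 ≤ a) (haN : a ≤ N)
    (h0 : ∀ i : Fin N, a ≤ (i:ℕ) → lam' i = 0) (hlt : ∀ i, (lam' i : ℕ) < N) :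
    (plc N k (upb N a lam')).card
      = (plc N k lam').card + (a - (k-1)) * (plc N (k-1) lam').card := by
  rw [← part_b ha1 haN h0 hlt, ← part_c hN hk ha1 haN h0 hlt]
  exact (Finset.card_filter_add_card_filter_not
    (s := plc N k (upb N a lam')) (p := fun P => ∀ c ∈ P, (c.2 : ℕ) ≠ 0)).symm

end L3c

lemma boards_filter_eq {N a b : ℕ} (ha1 : 1 ≤ a) (haN : a ≤ N) :
    (boards N a b).filter (fun lam => lam ⟨a-1, by omega⟩ = 0) = boards N (a-1) b := by
  ext lam
  rw [mem_filter, mem_boards, mem_boards]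
  constructor
  · rintro ⟨⟨hmono, hle, hpad⟩, hz⟩
    refine ⟨hmono, hle, ?_⟩
    intro i hi
    have h1 : (⟨a-1, by omega⟩ : Fin N) ≤ i := by rw [Fin.le_def]; simpa using hi
    have h2 := hmono _ i h1
    rw [hz] at h2
    exact Fin.le_zero_iff.mp h2
  · rintro ⟨hmono, hle, hpad⟩
    exact ⟨⟨hmono, hle, fun i hi => hpad i (by omega)⟩, hpad _ (by simp)⟩

lemma g_rec_pos {N a b k : ℕ} (ha1 : 1 ≤ a) (haN : a ≤ N) (hb1 : 1 ≤ b) (hbN : b ≤ N)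
    (hk : 1 ≤ k) :
    g N a b k = g N (a-1) b k + (g N a (b-1) k + (a - (k-1)) * g N a (b-1) (k-1)) := by
  have hN : 0 < N := by omega
  unfold g
  rw [← Finset.sum_filter_add_sum_filter_not (boards N a b)
    (fun lam => lam ⟨a-1, by omega⟩ = 0)]
  congr 1
  · rw [boards_filter_eq ha1 haN]
  · rw [sum_transport ha1 haN hb1 hbN (fun lam => (plc N k lam).card)]
    rw [Finset.sum_congr rfl (fun lam' hlam' => ?_), Finset.sum_add_distrib,
      Finset.mul_sum]
    rw [mem_boards] at hlam'
    obtain ⟨hmono, hle, hpad⟩ := hlam'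
    exact L3 hN hk ha1 haN hpad (fun i => by have := hle i; omega)

lemma g_rec_zero {N a b : ℕ} (ha1 : 1 ≤ a) (haN : a ≤ N) (hb1 : 1 ≤ b) (hbN : b ≤ N) :
    g N a b 0 = g N (a-1) b 0 + g N a (b-1) 0 := by
  unfold g
  rw [← Finset.sum_filter_add_sum_filter_not (boards N a b)
    (fun lam => lam ⟨a-1, by omega⟩ = 0)]
  congr 1
  · rw [boards_filter_eq ha1 haN]
  · rw [sum_transport ha1 haN hb1 hbN (fun lam => (plc N 0 lam).card)]
    apply Finset.sum_congr rfl
    intro lam' _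
    rw [plc_zero, plc_zero]

lemma fact_pred {m : ℕ} (h : 0 < m) : m.factorial = m * (m-1).factorial := by
  obtain ⟨c, rfl⟩ := Nat.exists_eq_succ_of_ne_zero h.ne'
  simp [Nat.factorial_succ]

lemma main (N : ℕ) : ∀ s a b k : ℕ, a + b = s → a ≤ N → b ≤ N → k ≤ a → k ≤ b →
    g N a b k * (2^k * k.factorial * (a-k).factorial * (b-k).factorial)
      = (a+b).factorial := by
  intro s
  induction s using Nat.strong_induction_on with
  | _ s ih =>
  intro a b k hs haN hbN hka hkb
  rcases Nat.eq_zero_or_pos a with rfl | ha1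
  · have hk0 : k = 0 := by omega
    subst hk0
    rw [g_a_zero]
    simp [Nat.factorial]
  rcases Nat.eq_zero_or_pos b with rfl | hb1
  · have hk0 : k = 0 := by omega
    subst hk0
    rw [g_b_zero]
    simp [Nat.factorial]
  have fab : (a+b).factorial = (a+b) * (a+b-1).factorial := fact_pred (by omega)
  rcases Nat.eq_zero_or_pos k with rfl | hk1
  · -- k = 0
    have IH1 := ih (s-1) (by omega) (a-1) b 0 (by omega) (by omega) hbN (by omega) (by omega)
    have IH2 := ih (s-1) (by omega) a (b-1) 0 (by omega) haN (by omega) (by omega) (by omega)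
    simp only [pow_zero, Nat.factorial_zero, one_mul, Nat.sub_zero] at IH1 IH2 ⊢
    rw [g_rec_zero ha1 haN hb1 hbN]
    have fa : a.factorial = a * (a-1).factorial := fact_pred (by omega)
    have fb : b.factorial = b * (b-1).factorial := fact_pred (by omega)
    calc (g N (a-1) b 0 + g N a (b-1) 0) * (a.factorial * b.factorial)
        = a * (g N (a-1) b 0 * ((a-1).factorial * b.factorial))
          + b * (g N a (b-1) 0 * (a.factorial * (b-1).factorial)) := by
          rw [fa, fb]; ring
      _ = a * (a-1+b).factorial + b * (a+(b-1)).factorial := by rw [IH1, IH2]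
      _ = (a+b) * (a+b-1).factorial := by
          rw [show a-1+b = a+b-1 by omega, show a+(b-1) = a+b-1 by omega]
          ring
      _ = (a+b).factorial := fab.symm
  · -- k ≥ 1
    rw [g_rec_pos ha1 haN hb1 hbN hk1]
    have T1 : g N (a-1) b k * (2^k * k.factorial * (a-k).factorial * (b-k).factorial)
        = (a-k) * (a+b-1).factorial := by
      rcases Nat.lt_or_ge k a with hlt | hge
      · have IH1 := ih (s-1) (by omega) (a-1) b k (by omega) (by omega) hbN (by omega) hkb
        have fak : (a-k).factorial = (a-k) * ((a-1)-k).factorial := by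
          rw [fact_pred (show 0 < a-k by omega), show a-k-1 = (a-1)-k by omega]
        calc g N (a-1) b k * (2^k * k.factorial * (a-k).factorial * (b-k).factorial)
            = (a-k) * (g N (a-1) b k * (2^k * k.factorial * ((a-1)-k).factorial * (b-k).factorial)) := by
              rw [fak]; ring
          _ = (a-k) * ((a-1)+b).factorial := by rw [IH1]
          _ = (a-k) * (a+b-1).factorial := by rw [show a-1+b = a+b-1 by omega]
      · have hka' : k = a := by omega
        rw [g_zero_of_cols (by omega), show a - k = 0 by omega]
        simp
    have T2 : g N a (b-1) k * (2^k * k.factorial * (a-k).factorial * (b-k).factorial)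
        = (b-k) * (a+b-1).factorial := by
      rcases Nat.lt_or_ge k b with hlt | hge
      · have IH2 := ih (s-1) (by omega) a (b-1) k (by omega) haN (by omega) hka (by omega)
        have fbk : (b-k).factorial = (b-k) * ((b-1)-k).factorial := by
          rw [fact_pred (show 0 < b-k by omega), show b-k-1 = (b-1)-k by omega]
        calc g N a (b-1) k * (2^k * k.factorial * (a-k).factorial * (b-k).factorial)
            = (b-k) * (g N a (b-1) k * (2^k * k.factorial * (a-k).factorial * ((b-1)-k).factorial)) := by
              rw [fbk]; ring
          _ = (b-k) * (a+(b-1)).factorial := by rw [IH2]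
          _ = (b-k) * (a+b-1).factorial := by rw [show a+(b-1) = a+b-1 by omega]
      · have hkb' : k = b := by omega
        rw [g_zero_of_rows (by omega), show b - k = 0 by omega]
        simp
    have T3 : (a-(k-1)) * g N a (b-1) (k-1) * (2^k * k.factorial * (a-k).factorial * (b-k).factorial)
        = (2*k) * (a+b-1).factorial := by
      have IH3 := ih (s-1) (by omega) a (b-1) (k-1) (by omega) haN (by omega) (by omega) (by omega)
      rw [show (b-1)-(k-1) = b-k by omega, show a+(b-1) = a+b-1 by omega] at IH3
      have f1 : (2:ℕ)^k = 2 * 2^(k-1) := by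
        conv_lhs => rw [show k = (k-1)+1 by omega]
        rw [pow_succ]
        ring
      have f2 : k.factorial = k * (k-1).factorial := fact_pred (by omega)
      have f3 : (a-(k-1)).factorial = (a-(k-1)) * (a-k).factorial := by
        rw [fact_pred (show 0 < a-(k-1) by omega), show a-(k-1)-1 = a-k by omega]
      calc (a-(k-1)) * g N a (b-1) (k-1) * (2^k * k.factorial * (a-k).factorial * (b-k).factorial)
          = (2*k) * (g N a (b-1) (k-1) * (2^(k-1) * (k-1).factorial * ((a-(k-1)) * (a-k).factorial) * (b-k).factorial)) := by
            rw [f1, f2]; ring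
        _ = (2*k) * (g N a (b-1) (k-1) * (2^(k-1) * (k-1).factorial * (a-(k-1)).factorial * (b-k).factorial)) := by
            rw [f3]
        _ = (2*k) * (a+b-1).factorial := by rw [IH3]
    calc (g N (a-1) b k + (g N a (b-1) k + (a-(k-1)) * g N a (b-1) (k-1)))
          * (2^k * k.factorial * (a-k).factorial * (b-k).factorial)
        = g N (a-1) b k * (2^k * k.factorial * (a-k).factorial * (b-k).factorial)
          + g N a (b-1) k * (2^k * k.factorial * (a-k).factorial * (b-k).factorial)
          + (a-(k-1)) * g N a (b-1) (k-1) * (2^k * k.factorial * (a-k).factorial * (b-k).factorial) := by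
          ring
      _ = (a-k) * (a+b-1).factorial + (b-k) * (a+b-1).factorial + (2*k) * (a+b-1).factorial := by
          rw [T1, T2, T3]
      _ = (a+b) * (a+b-1).factorial := by
          rw [← Nat.add_mul, ← Nat.add_mul, show (a-k)+(b-k)+2*k = a+b by omega]
      _ = (a+b).factorial := fab.symm

open Finset in
theorem stmt_6 (n k : ℕ) (hk : k ≤ n) :
    (∑ lam ∈ (univ : Finset (Fin n → Fin (n + 1))).filter
        (fun lam => ∀ i j : Fin n, i ≤ j → lam j ≤ lam i),
      ((univ : Finset (Finset (Fin n × Fin n))).filter (fun P =>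
        P.card = k ∧ (∀ c ∈ P, (c.2 : ℕ) < (lam c.1 : ℕ)) ∧
        (∀ c ∈ P, ∀ c' ∈ P, c ≠ c' → c.1 ≠ c'.1 ∧ c.2 ≠ c'.2))).card) *
      (2 ^ k * k.factorial * (n - k).factorial * (n - k).factorial) =
    (2 * n).factorial := by
  have hb : boards n n n = (univ : Finset (Fin n → Fin (n + 1))).filter
      (fun lam => ∀ i j : Fin n, i ≤ j → lam j ≤ lam i) := by
    apply Finset.filter_congr
    intro lam _
    constructor
    · exact fun h => h.1
    · intro h
      refine ⟨h, fun i => Fin.is_le _, fun i hi => absurd i.isLt (by omega)⟩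
  have hsum : (∑ lam ∈ (univ : Finset (Fin n → Fin (n + 1))).filter
        (fun lam => ∀ i j : Fin n, i ≤ j → lam j ≤ lam i),
      ((univ : Finset (Finset (Fin n × Fin n))).filter (fun P =>
        P.card = k ∧ (∀ c ∈ P, (c.2 : ℕ) < (lam c.1 : ℕ)) ∧
        (∀ c ∈ P, ∀ c' ∈ P, c ≠ c' → c.1 ≠ c'.1 ∧ c.2 ≠ c'.2))).card) = g n n n k := by
    rw [g, hb]
    rfl
  rw [hsum, show 2 * n = n + n by ring]
  exact main n (n+n) n n k rfl le_rfl le_rfl hk hk
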